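/- Let p ∈ [1,∞), define τ by 1/τ = 1/p + 1/2, let A > 0, and let f ∈ C¹([0,1]²). For N ≥ 1 let σ_N^A(f)_p := inf over all partitions 𝒯 of [0,1]² into at most N axis-aligned rectangles, each of diameter at most A N^{−1/2}, of the global error e_{1,𝒯}(f)_p = (Σ_{T∈𝒯} e_{1,T}(f)_p^p)^{1/p}. Then liminf_{N→∞} N^{1/2} σ_N^A(f)_p ≥ ‖K_p(∇f)‖_{L^τ([0,1]²)}, where K_p(∇f)(z) := inf over axis-aligned rectangles T of unit area of e_{1,T}(𝐪_z)_p with 𝐪_z(x,y) = ∂_x f(z)·x + ∂_y f(z)·y. -/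

import Mathlib

open Set MeasureTheory ENNReal

/-- The axis-aligned rectangle `[a, a+w] × [b, b+h]`. -/
def rect (a b w h : ℝ) : Set (ℝ × ℝ) := Set.Icc a (a + w) ×ˢ Set.Icc b (b + h)

/-- Best-constant `L^p` approximation error `e_{1,T}(g)_p = inf_c ‖g - c‖_{L^p(T)}`. -/
noncomputable def constErr (p : ℝ≥0∞) (g : ℝ × ℝ → ℝ) (T : Set (ℝ × ℝ)) : ℝ≥0∞ :=
  ⨅ c : ℝ, eLpNorm (fun z => g z - c) p (volume.restrict T)

/-- The shape function `K_p(𝐪)`: the infimum over all unit-area axis-aligned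
rectangles of the best-constant `L^p` error of `𝐪(x,y) = q_x x + q_y y`. -/
noncomputable def shapeK (p : ℝ≥0∞) (qx qy : ℝ) : ℝ≥0∞ :=
  sInf { e : ℝ≥0∞ | ∃ a b w h : ℝ, 0 < w ∧ 0 < h ∧ w * h = 1 ∧
    e = constErr p (fun z => qx * z.1 + qy * z.2) (rect a b w h) }

/-- The unit square `[0,1]²`. -/
def unitSq : Set (ℝ × ℝ) := Set.Icc (0:ℝ) 1 ×ˢ Set.Icc (0:ℝ) 1

/-- Global error `(Σ_T e_T^p)^{1/p}` over a finite partition (max when `p = ∞`). -/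
noncomputable def globErrP (p : ℝ≥0∞) {ι : Type*} [Fintype ι] (e : ι → ℝ≥0∞) : ℝ≥0∞ :=
  if p = ⊤ then ⨆ i, e i else (∑ i, e i ^ p.toReal) ^ (1 / p.toReal)

/-- `σ_N^A(f)_p`: infimum over all partitions of `[0,1]²` into at most `N` axis-aligned
rectangles, each of diameter at most `A N^{-1/2}`, of the global piecewise-constant
`L^p` error. -/
noncomputable def rectSigmaA (p : ℝ≥0∞) (A : ℝ) (f : ℝ × ℝ → ℝ) (N : ℕ) : ℝ≥0∞ :=
  sInf { e : ℝ≥0∞ | ∃ M : ℕ, 1 ≤ M ∧ M ≤ N ∧ ∃ a b w h : Fin M → ℝ,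
    (∀ i, 0 < w i ∧ 0 < h i) ∧
    (∀ i, Metric.diam (rect (a i) (b i) (w i) (h i)) ≤ A * (N : ℝ) ^ (-(1:ℝ) / 2)) ∧
    (∀ i i', i ≠ i' →
      Disjoint (interior (rect (a i) (b i) (w i) (h i)))
        (interior (rect (a i') (b i') (w i') (h i')))) ∧
    (⋃ i, rect (a i) (b i) (w i) (h i)) = unitSq ∧
    e = globErrP p fun i => constErr p f (rect (a i) (b i) (w i) (h i)) }

open Pointwise

lemma finrank_RR : Module.finrank ℝ (ℝ × ℝ) = 2 := by
  simp [Module.finrank_prod]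

lemma map_smul_vol (r : ℝ) (hr : 0 < r) :
    Measure.map (fun y : ℝ × ℝ => r • y) volume = ENNReal.ofReal ((r ^ 2)⁻¹) • volume := by
  ext A hA
  rw [Measure.map_apply (measurable_const_smul r) hA]
  have h1 : (fun y : ℝ × ℝ => r • y) ⁻¹' A = r⁻¹ • A := by
    rw [Set.preimage_smul₀ hr.ne' A]
  rw [h1, Measure.addHaar_smul, Measure.smul_apply, finrank_RR]
  congr 1
  rw [abs_of_nonneg (by positivity), inv_pow]

lemma lintegral_smul_set (r : ℝ) (hr : 0 < r) (S : Set (ℝ × ℝ)) (hS : MeasurableSet (r • S))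
    (g : ℝ × ℝ → ℝ≥0∞) :
    ∫⁻ z in r • S, g z = ENNReal.ofReal (r ^ 2) * ∫⁻ y in S, g (r • y) := by
  have hvol : volume = ENNReal.ofReal (r ^ 2) • Measure.map (fun y : ℝ × ℝ => r • y) volume := by
    rw [map_smul_vol r hr, smul_smul, ← ENNReal.ofReal_mul (by positivity),
      mul_inv_cancel₀ (by positivity), ENNReal.ofReal_one, one_smul]
  have hpre : (fun y : ℝ × ℝ => r • y) ⁻¹' (r • S) = S := by
    rw [Set.preimage_smul₀ hr.ne', inv_smul_smul₀ hr.ne']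
  calc ∫⁻ z in r • S, g z
      = ∫⁻ z, g z ∂((ENNReal.ofReal (r ^ 2) • Measure.map (fun y : ℝ × ℝ => r • y) volume).restrict (r • S)) := by
        rw [← hvol]
    _ = ENNReal.ofReal (r ^ 2) * ∫⁻ z, g z ∂((Measure.map (fun y : ℝ × ℝ => r • y) volume).restrict (r • S)) := by
        rw [Measure.restrict_smul, lintegral_smul_measure, smul_eq_mul]
    _ = ENNReal.ofReal (r ^ 2) * ∫⁻ z, g z ∂(Measure.map (fun y : ℝ × ℝ => r • y) (volume.restrict S)) := by
        rw [Measure.restrict_map (measurable_const_smul r) hS, hpre]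
    _ = ENNReal.ofReal (r ^ 2) * ∫⁻ y in S, g (r • y) := by
        congr 1
        have : (fun y : ℝ × ℝ => r • y) = ⇑(MeasurableEquiv.smul₀ r hr.ne' : (ℝ × ℝ) ≃ᵐ (ℝ × ℝ)) := rfl
        rw [this, MeasureTheory.lintegral_map_equiv g (MeasurableEquiv.smul₀ r hr.ne')]
        rfl

lemma eLpNorm_smul_set (p : ℝ≥0∞) (hp0 : p ≠ 0) (hptop : p ≠ ⊤) (r : ℝ) (hr : 0 < r)
    (S : Set (ℝ × ℝ)) (hS : MeasurableSet (r • S)) (g : ℝ × ℝ → ℝ) :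
    eLpNorm g p (volume.restrict (r • S)) =
      ENNReal.ofReal (r ^ 2) ^ (1 / p.toReal) *
        eLpNorm (fun y => g (r • y)) p (volume.restrict S) := by
  rw [eLpNorm_eq_lintegral_rpow_enorm_toReal hp0 hptop, eLpNorm_eq_lintegral_rpow_enorm_toReal hp0 hptop,
    lintegral_smul_set r hr S hS (fun z => ‖g z‖ₑ ^ p.toReal),
    ENNReal.mul_rpow_of_nonneg _ _ (by positivity : (0:ℝ) ≤ 1 / p.toReal)]

lemma smul_rect (r : ℝ) (hr : 0 < r) (a b w h : ℝ) :
    r • rect a b w h = rect (r * a) (r * b) (r * w) (r * h) := by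
  ext z
  rw [mem_smul_set_iff_inv_smul_mem₀ hr.ne']
  have hz : r⁻¹ • z = (r⁻¹ * z.1, r⁻¹ * z.2) := rfl
  simp only [rect, hz, Set.mem_prod, Set.mem_Icc]
  rw [le_inv_mul_iff₀ hr, inv_mul_le_iff₀ hr, le_inv_mul_iff₀ hr, inv_mul_le_iff₀ hr,
    mul_add, mul_add]

lemma rect_measurable (a b w h : ℝ) : MeasurableSet (rect a b w h) :=
  (measurableSet_Icc.prod measurableSet_Icc)

lemma key1 (p : ℝ≥0∞) (hp0 : p ≠ 0) (hptop : p ≠ ⊤) (qx qy a b w h : ℝ)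
    (hw : 0 < w) (hh : 0 < h) :
    ENNReal.ofReal (w * h) ^ (1 / p.toReal + 1 / 2) * shapeK p qx qy ≤
      constErr p (fun z => qx * z.1 + qy * z.2) (rect a b w h) := by
  set r : ℝ := Real.sqrt (w * h) with hrdef
  have hr : 0 < r := Real.sqrt_pos.2 (by positivity)
  have hr2 : r ^ 2 = w * h := Real.sq_sqrt (by positivity)
  set S : Set (ℝ × ℝ) := rect (a / r) (b / r) (w / r) (h / r) with hSdef
  have hsm : r • S = rect a b w h := by
    rw [hSdef, smul_rect r hr, mul_div_cancel₀ _ hr.ne', mul_div_cancel₀ _ hr.ne',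
      mul_div_cancel₀ _ hr.ne', mul_div_cancel₀ _ hr.ne']
  have hK : shapeK p qx qy ≤ constErr p (fun z => qx * z.1 + qy * z.2) S := by
    apply sInf_le
    exact ⟨a / r, b / r, w / r, h / r, by positivity, by positivity,
      by rw [div_mul_div_comm, ← hr2]; field_simp, rfl⟩
  -- constant
  have hC : ENNReal.ofReal (r ^ 2) ^ (1 / p.toReal) * ENNReal.ofReal r =
      ENNReal.ofReal (w * h) ^ (1 / p.toReal + 1 / 2) := by
    rw [ENNReal.rpow_add _ _ (by simp [ENNReal.ofReal_eq_zero]; nlinarith : ENNReal.ofReal (w*h) ≠ 0)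
        ENNReal.ofReal_ne_top, hr2]
    congr 1
    rw [hrdef, Real.sqrt_eq_rpow, ENNReal.ofReal_rpow_of_nonneg (by positivity) (by norm_num)]
  rw [constErr, ← hsm]
  refine le_iInf fun c => ?_
  have heq : eLpNorm (fun z => qx * z.1 + qy * z.2 - c) p (volume.restrict (r • S)) =
      ENNReal.ofReal (r ^ 2) ^ (1 / p.toReal) * ENNReal.ofReal r *
        eLpNorm (fun y => qx * y.1 + qy * y.2 - c / r) p (volume.restrict S) := by
    rw [eLpNorm_smul_set p hp0 hptop r hr S (hsm ▸ rect_measurable a b w h)]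
    have : (fun y : ℝ × ℝ => qx * (r • y).1 + qy * (r • y).2 - c) =
        r • (fun y : ℝ × ℝ => qx * y.1 + qy * y.2 - c / r) := by
      funext y
      have h1 : (r • y).1 = r * y.1 := rfl
      have h2 : (r • y).2 = r * y.2 := rfl
      simp only [h1, h2, Pi.smul_apply, smul_eq_mul]
      field_simp
    rw [this, eLpNorm_const_smul, mul_assoc]
    congr 2
    rw [← ofReal_norm, Real.norm_eq_abs, abs_of_nonneg hr.le]
  rw [heq, hC]
  refine mul_le_mul_right (le_trans hK ?_) _
  exact iInf_le _ (c / r)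

lemma unitSq_compact : IsCompact unitSq := isCompact_Icc.prod isCompact_Icc

lemma unitSq_convex : Convex ℝ unitSq := (convex_Icc _ _).prod (convex_Icc _ _)

lemma unitSq_uniqueDiff : UniqueDiffOn ℝ unitSq := by
  apply uniqueDiffOn_convex unitSq_convex
  rw [unitSq, interior_prod_eq, interior_Icc]
  exact ⟨(1/2, 1/2), by norm_num, by norm_num⟩

lemma rect_convex (a b w h : ℝ) : Convex ℝ (rect a b w h) :=
  (convex_Icc _ _).prod (convex_Icc _ _)

lemma rect_uniqueDiff (a b w h : ℝ) (hw : 0 < w) (hh : 0 < h) :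
    UniqueDiffOn ℝ (rect a b w h) := by
  apply uniqueDiffOn_convex (rect_convex a b w h)
  rw [rect, interior_prod_eq, interior_Icc, interior_Icc]
  exact ⟨(a + w/2, b + h/2), by constructor <;> [skip; skip] <;> simp <;> linarith⟩

lemma clm_eq_lin (L : (ℝ × ℝ) →L[ℝ] ℝ) (y : ℝ × ℝ) :
    L y = L (1, 0) * y.1 + L (0, 1) * y.2 := by
  have hy : y = y.1 • ((1:ℝ), (0:ℝ)) + y.2 • ((0:ℝ), (1:ℝ)) := by
    ext <;> simp
  conv_lhs => rw [hy]
  rw [map_add, L.map_smul, L.map_smul]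
  simp [smul_eq_mul]
  ring

lemma key2 (p : ℝ≥0∞) (hp : 1 ≤ p) (f : ℝ × ℝ → ℝ) (hf : ContDiffOn ℝ 1 f unitSq)
    (ε : ℝ) (hε : 0 < ε) :
    ∃ δ > (0:ℝ), ∀ a b w h : ℝ, 0 < w → 0 < h → rect a b w h ⊆ unitSq →
      ∀ d : ℝ, Metric.diam (rect a b w h) ≤ d → d ≤ δ → ∀ z ∈ rect a b w h,
      constErr p (fun y => fderivWithin ℝ f unitSq z (1, 0) * y.1 +
          fderivWithin ℝ f unitSq z (0, 1) * y.2) (rect a b w h) ≤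
        constErr p f (rect a b w h) +
          volume (rect a b w h) ^ (1 / p.toReal) * ENNReal.ofReal (ε * d) := by
  have hD : ContinuousOn (fderivWithin ℝ f unitSq) unitSq :=
    hf.continuousOn_fderivWithin unitSq_uniqueDiff le_rfl
  have hUC := unitSq_compact.uniformContinuousOn_of_continuous hD
  rw [Metric.uniformContinuousOn_iff] at hUC
  obtain ⟨δ', hδ', hδ'uc⟩ := hUC ε hε
  refine ⟨δ' / 2, by positivity, ?_⟩
  intro a b w h hw hh hsub d hdiam hdδ z hz
  set T := rect a b w h with hT
  set L := fderivWithin ℝ f unitSq z with hL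
  set φ : ℝ × ℝ → ℝ := fun y => f y - L y - (f z - L z) with hφ
  have hdiff : DifferentiableOn ℝ f unitSq := hf.differentiableOn one_ne_zero
  -- MVT bound
  have hbound : ∀ y ∈ T, ‖φ y‖ ≤ ε * d := by
    intro y hy
    have hgd : DifferentiableOn ℝ (fun y => f y - L y) T :=
      (hdiff.mono hsub).sub L.differentiable.differentiableOn
    have hder : ∀ x ∈ T, ‖fderivWithin ℝ (fun y => f y - L y) T x‖ ≤ ε := by
      intro x hx
      have hud := (rect_uniqueDiff a b w h hw hh) x hx
      have h1 : fderivWithin ℝ (fun y => f y - L y) T x =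
          fderivWithin ℝ f T x - L := by
        rw [show (fun y => f y - L y) = f - ⇑L from rfl, fderivWithin_sub hud ((hdiff.mono hsub) x hx) L.differentiable.differentiableAt.differentiableWithinAt]
        rw [L.fderivWithin hud]
      have h2 : fderivWithin ℝ f T x = fderivWithin ℝ f unitSq x :=
        fderivWithin_subset hsub hud (hdiff x (hsub hx))
      rw [h1, h2]
      have hdist : dist x z < δ' := by
        have h3 := Metric.dist_le_diam_of_mem (unitSq_compact.isBounded.subset hsub) hx hz
        linarith
      have := hδ'uc x (hsub hx) z (hsub hz) hdist
      rw [dist_eq_norm] at this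
      exact this.le
    have hmvt := (rect_convex a b w h).norm_image_sub_le_of_norm_fderivWithin_le hgd hder hz hy
    have hyz : ‖y - z‖ ≤ d := by
      rw [← dist_eq_norm]
      exact le_trans (Metric.dist_le_diam_of_mem (unitSq_compact.isBounded.subset hsub) hy hz) hdiam
    calc ‖φ y‖ = ‖f y - L y - (f z - L z)‖ := rfl
      _ ≤ ε * ‖y - z‖ := hmvt
      _ ≤ ε * d := by nlinarith
  -- eLpNorm bound on φ
  have hφmeas : AEStronglyMeasurable φ (volume.restrict T) := by
    apply ContinuousOn.aestronglyMeasurable _ (rect_measurable a b w h)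
    exact (((hf.continuousOn.mono hsub).sub (L.continuous.continuousOn)).sub continuousOn_const)
  have hB : eLpNorm φ p (volume.restrict T) ≤
      volume T ^ (1 / p.toReal) * ENNReal.ofReal (ε * d) := by
    have hae : ∀ᵐ y ∂(volume.restrict T), ‖φ y‖ ≤ ε * d :=
      (ae_restrict_mem (rect_measurable a b w h)).mono hbound
    calc eLpNorm φ p (volume.restrict T) ≤
        (volume.restrict T) Set.univ ^ p.toReal⁻¹ * ENNReal.ofReal (ε * d) :=
          eLpNorm_le_of_ae_bound hae
      _ = volume T ^ (1 / p.toReal) * ENNReal.ofReal (ε * d) := by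
          rw [Measure.restrict_apply_univ, one_div]
  -- triangle inequality
  have htri : ∀ c : ℝ, constErr p (fun y => L (1, 0) * y.1 + L (0, 1) * y.2) T ≤
      eLpNorm (fun y => f y - c) p (volume.restrict T) +
        volume T ^ (1 / p.toReal) * ENNReal.ofReal (ε * d) := by
    intro c
    have hfun : (fun y : ℝ × ℝ => (L (1, 0) * y.1 + L (0, 1) * y.2) - (c - (f z - L z))) =
        (fun y => f y - c) + (fun y => -φ y) := by
      funext y
      have := clm_eq_lin L y
      simp only [Pi.add_apply, hφ]
      rw [← this]
      ring
    refine le_trans (iInf_le _ (c - (f z - L z))) ?_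
    rw [hfun]
    refine le_trans (eLpNorm_add_le ?_ hφmeas.neg hp) ?_
    · apply ContinuousOn.aestronglyMeasurable _ (rect_measurable a b w h)
      exact (hf.continuousOn.mono hsub).sub continuousOn_const
    · have hnn : (fun y => -φ y) = -φ := rfl
      rw [hnn, eLpNorm_neg]
      exact add_le_add_right hB _
  calc constErr p (fun y => L (1, 0) * y.1 + L (0, 1) * y.2) T ≤
      ⨅ c : ℝ, (eLpNorm (fun y => f y - c) p (volume.restrict T) +
        volume T ^ (1 / p.toReal) * ENNReal.ofReal (ε * d)) := le_iInf htri
    _ = constErr p f T + volume T ^ (1 / p.toReal) * ENNReal.ofReal (ε * d) := by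
      rw [constErr]
      rw [ENNReal.iInf_add]

lemma vol_rect (a b w h : ℝ) :
    volume (rect a b w h) = ENNReal.ofReal w * ENNReal.ofReal h := by
  rw [rect, Measure.volume_eq_prod, Measure.prod_prod, Real.volume_Icc, Real.volume_Icc,
    add_sub_cancel_left, add_sub_cancel_left]

lemma vol_unitSq : volume unitSq = 1 := by
  rw [unitSq, Measure.volume_eq_prod, Measure.prod_prod, Real.volume_Icc]
  norm_num

lemma vol_interior_rect (a b w h : ℝ) :
    volume (interior (rect a b w h)) = volume (rect a b w h) := by
  rw [vol_rect, rect, interior_prod_eq, interior_Icc, interior_Icc, Measure.volume_eq_prod,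
    Measure.prod_prod, Real.volume_Ioo, Real.volume_Ioo,
    add_sub_cancel_left, add_sub_cancel_left]

lemma sum_vol_le {M : ℕ} (a b w h : Fin M → ℝ)
    (hdisj : ∀ i i', i ≠ i' → Disjoint (interior (rect (a i) (b i) (w i) (h i)))
      (interior (rect (a i') (b i') (w i') (h i'))))
    (hcover : (⋃ i, rect (a i) (b i) (w i) (h i)) = unitSq) :
    ∑ i, volume (rect (a i) (b i) (w i) (h i)) ≤ 1 := by
  have h1 : ∀ i, volume (rect (a i) (b i) (w i) (h i)) =
      volume (interior (rect (a i) (b i) (w i) (h i))) :=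
    fun i => (vol_interior_rect _ _ _ _).symm
  simp_rw [h1]
  have h2 : volume (⋃ i, interior (rect (a i) (b i) (w i) (h i))) =
      ∑' i, volume (interior (rect (a i) (b i) (w i) (h i))) :=
    measure_iUnion (fun i j hij => hdisj i j hij) (fun i => isOpen_interior.measurableSet)
  rw [← tsum_fintype (L := SummationFilter.unconditional _), ← h2]
  calc volume (⋃ i, interior (rect (a i) (b i) (w i) (h i))) ≤ volume unitSq := by
        apply measure_mono
        rw [← hcover]
        exact Set.iUnion_mono fun i => interior_subset
    _ = 1 := vol_unitSq

lemma ae_interior_unitSq (S : Set (ℝ × ℝ)) (hS : S ⊆ unitSq) :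
    ∀ᵐ z ∂(volume.restrict S), z ∈ interior unitSq := by
  rw [ae_iff, Measure.restrict_apply]
  · apply le_antisymm _ zero_le
    calc volume ({z | ¬ z ∈ interior unitSq} ∩ S) ≤ volume (unitSq \ interior unitSq) := by
          apply measure_mono
          rintro z ⟨hz1, hz2⟩
          exact ⟨hS hz2, hz1⟩
      _ = 0 := by
          rw [measure_diff interior_subset isOpen_interior.measurableSet.nullMeasurableSet]
          · rw [vol_unitSq]
            have : volume (interior unitSq) = 1 := by
              rw [unitSq, interior_prod_eq, interior_Icc, Measure.volume_eq_prod,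
                Measure.prod_prod, Real.volume_Ioo]
              norm_num
            rw [this, tsub_self]
          · rw [unitSq, interior_prod_eq, interior_Icc, Measure.volume_eq_prod,
              Measure.prod_prod, Real.volume_Ioo]
            norm_num
  · exact (isOpen_interior.measurableSet.compl)

lemma fderiv_eq_fderivWithin {f : ℝ × ℝ → ℝ} {z : ℝ × ℝ} (hz : z ∈ interior unitSq) :
    fderivWithin ℝ f unitSq z = fderiv ℝ f z :=
  fderivWithin_of_mem_nhds (mem_nhds_iff.2 ⟨interior unitSq, interior_subset, isOpen_interior, hz⟩)

lemma key3 (p : ℝ≥0∞) (hp : 1 ≤ p) (hptop : p ≠ ⊤) (τ : ℝ)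
    (hτ : 1 / τ = 1 / p.toReal + 1 / 2) (A : ℝ) (hA : 0 < A)
    (f : ℝ × ℝ → ℝ) (hf : ContDiffOn ℝ 1 f unitSq) (ε : ℝ) (hε : 0 < ε) :
    ∃ δ > (0:ℝ), ∀ N : ℕ, 1 ≤ N → A * (N : ℝ) ^ (-(1:ℝ) / 2) ≤ δ →
      (∫⁻ z in unitSq, (shapeK p (fderiv ℝ f z (1, 0)) (fderiv ℝ f z (0, 1))) ^ τ) ^ (1 / τ) ≤
        (N : ℝ≥0∞) ^ ((1:ℝ) / 2) * rectSigmaA p A f N + ENNReal.ofReal (ε * A) := by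
  -- real-number bookkeeping
  have hp0 : p ≠ 0 := fun h => by simp [h] at hp
  have hP1 : 1 ≤ p.toReal := by
    have := ENNReal.toReal_mono hptop hp
    simpa using this
  have hP0 : 0 < p.toReal := lt_of_lt_of_le one_pos hP1
  set P := p.toReal with hPdef
  have hτpos : 0 < τ := by
    have h1 : 0 < 1 / τ := by rw [hτ]; positivity
    exact one_div_pos.mp h1
  set r : ℝ := 1 + P / 2 with hrdef
  have hr1 : 1 ≤ r := by rw [hrdef]; linarith
  have hr0 : 0 < r := lt_of_lt_of_le one_pos hr1
  have idA : τ * r = P := by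
    have hτne : τ ≠ 0 := hτpos.ne'
    have h3 : (1:ℝ) = τ * (1 / P + 1 / 2) := by
      rw [← hτ]; field_simp
    have h2 : P * 2 = τ * (2 + P) := by
      field_simp at h3; linarith
    rw [hrdef]
    ring_nf
    ring_nf at h2
    linarith
  obtain ⟨δ, hδpos, hkey2⟩ := key2 p hp f hf ε hε
  refine ⟨δ, hδpos, ?_⟩
  intro N hN hNδ
  set d : ℝ := A * (N : ℝ) ^ (-(1:ℝ) / 2) with hddef
  have hd0 : 0 < d := by
    rw [hddef]
    have : (0:ℝ) < (N : ℝ) := by exact_mod_cast hN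
    positivity
  set X : ℝ≥0∞ :=
    (∫⁻ z in unitSq, (shapeK p (fderiv ℝ f z (1, 0)) (fderiv ℝ f z (0, 1))) ^ τ) ^ (1 / τ)
    with hXdef
  set k : ℝ≥0∞ := (N : ℝ≥0∞) ^ ((1:ℝ) / 2) with hkdef
  have hNne : ((N : ℝ≥0∞)) ≠ 0 := Nat.cast_ne_zero.mpr (by omega)
  have hNtop : ((N : ℝ≥0∞)) ≠ ⊤ := ENNReal.natCast_ne_top N
  have hk0 : k ≠ 0 := (ENNReal.rpow_pos (by positivity) hNtop).ne'
  have hktop : k ≠ ⊤ := ENNReal.rpow_ne_top_of_nonneg (by norm_num) hNtop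
  set c : ℝ≥0∞ := ENNReal.ofReal (ε * A) with hcdef
  -- main per-partition estimate
  have hpart : ∀ g ∈ { e : ℝ≥0∞ | ∃ M : ℕ, 1 ≤ M ∧ M ≤ N ∧ ∃ a b w h : Fin M → ℝ,
      (∀ i, 0 < w i ∧ 0 < h i) ∧
      (∀ i, Metric.diam (rect (a i) (b i) (w i) (h i)) ≤ A * (N : ℝ) ^ (-(1:ℝ) / 2)) ∧
      (∀ i i', i ≠ i' →
        Disjoint (interior (rect (a i) (b i) (w i) (h i)))
          (interior (rect (a i') (b i') (w i') (h i')))) ∧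
      (⋃ i, rect (a i) (b i) (w i) (h i)) = unitSq ∧
      e = globErrP p fun i => constErr p f (rect (a i) (b i) (w i) (h i)) },
      X ≤ k * g + c := by
    rintro g ⟨M, hM1, hMN, a, b, w, h, hwh, hdiam, hdisj, hcover, rfl⟩
    set T : Fin M → Set (ℝ × ℝ) := fun i => rect (a i) (b i) (w i) (h i) with hTdef
    set v : Fin M → ℝ≥0∞ := fun i => volume (T i) with hvdef
    set e : Fin M → ℝ≥0∞ := fun i => constErr p f (T i) with hedef
    set D := fderivWithin ℝ f unitSq with hDdef
    set Ki : Fin M → ℝ≥0∞ := fun i => ⨆ z : (T i), shapeK p (D z (1, 0)) (D z (0, 1))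
      with hKidef
    set B : ℝ≥0∞ := ENNReal.ofReal (ε * d) with hBdef
    set Bi : Fin M → ℝ≥0∞ := fun i => v i ^ (1 / P) * B with hBidef
    set ai : Fin M → ℝ≥0∞ := fun i => Ki i * v i ^ (1 / τ) with haidef
    have hsub : ∀ i, T i ⊆ unitSq := by
      intro i; rw [← hcover]; exact Set.subset_iUnion _ i
    have hvr : ∀ i, v i = ENNReal.ofReal (w i * h i) := by
      intro i
      rw [hvdef]
      simp only [hTdef]
      rw [vol_rect, ← ENNReal.ofReal_mul (hwh i).1.le]
    -- (α)
    have ha : ∀ i, ai i ≤ e i + Bi i := by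
      intro i
      rw [haidef]
      simp only [hKidef]
      rw [ENNReal.iSup_mul]
      apply iSup_le
      rintro ⟨z, hz⟩
      have h1 := key1 p hp0 hptop (D z (1, 0)) (D z (0, 1)) (a i) (b i) (w i) (h i)
        (hwh i).1 (hwh i).2
      have h2 := hkey2 (a i) (b i) (w i) (h i) (hwh i).1 (hwh i).2 (hsub i) d
        (hdiam i) hNδ z hz
      calc shapeK p (D z (1, 0)) (D z (0, 1)) * v i ^ (1 / τ)
          = ENNReal.ofReal (w i * h i) ^ (1 / P + 1 / 2) * shapeK p (D z (1, 0)) (D z (0, 1)) := by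
            rw [hvr i, mul_comm, ← hτ]
        _ ≤ constErr p (fun y => D z (1, 0) * y.1 + D z (0, 1) * y.2) (T i) := h1
        _ ≤ e i + Bi i := h2
    -- (β) lintegral bound
    have hL : (∫⁻ z in unitSq, (shapeK p (fderiv ℝ f z (1, 0)) (fderiv ℝ f z (0, 1))) ^ τ) ≤
        ∑ i, (ai i) ^ τ := by
      rw [← hcover]
      refine le_trans (lintegral_iUnion_le _ _) ?_
      rw [tsum_fintype]
      apply Finset.sum_le_sum
      intro i _
      have hae : ∀ᵐ z ∂(volume.restrict (T i)),
          (shapeK p (fderiv ℝ f z (1, 0)) (fderiv ℝ f z (0, 1))) ^ τ ≤ (Ki i) ^ τ := by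
        filter_upwards [ae_restrict_mem (rect_measurable (a i) (b i) (w i) (h i)),
          ae_interior_unitSq (T i) (hsub i)] with z hz1 hz2
        rw [← fderiv_eq_fderivWithin hz2]
        exact ENNReal.rpow_le_rpow
          (le_iSup (fun z : (T i) => shapeK p (D z (1, 0)) (D z (0, 1))) ⟨z, hz1⟩) hτpos.le
      calc (∫⁻ z in T i, (shapeK p (fderiv ℝ f z (1, 0)) (fderiv ℝ f z (0, 1))) ^ τ) ≤
          ∫⁻ _ in T i, (Ki i) ^ τ := lintegral_mono_ae hae
        _ = (Ki i) ^ τ * v i := by rw [setLIntegral_const]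
        _ = (ai i) ^ τ := by
            rw [haidef]
            rw [ENNReal.mul_rpow_of_nonneg _ _ hτpos.le, ← ENNReal.rpow_mul,
              one_div, inv_mul_cancel₀ hτpos.ne', ENNReal.rpow_one]
    -- (δ) Hölder
    have hHolder : ∑ i, (ai i) ^ τ ≤ ((N : ℝ≥0∞) ^ (r - 1) * ∑ i, (ai i) ^ P) ^ (1 / r) := by
      have h1 : (∑ i, (ai i) ^ τ) ^ r ≤
          ((Finset.univ : Finset (Fin M)).card : ℝ≥0∞) ^ (r - 1) * ∑ i, ((ai i) ^ τ) ^ r :=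
        ENNReal.rpow_sum_le_const_mul_sum_rpow Finset.univ _ hr1
      have h2 : ∀ i : Fin M, ((ai i) ^ τ) ^ r = (ai i) ^ P := by
        intro i; rw [← ENNReal.rpow_mul, idA]
      simp_rw [h2] at h1
      have h3 : (((Finset.univ : Finset (Fin M)).card : ℝ≥0∞)) ≤ (N : ℝ≥0∞) := by
        simp only [Finset.card_univ, Fintype.card_fin]
        exact_mod_cast hMN
      have h4 : (∑ i, (ai i) ^ τ) ^ r ≤ (N : ℝ≥0∞) ^ (r - 1) * ∑ i, (ai i) ^ P :=
        le_trans h1 (mul_le_mul_left (ENNReal.rpow_le_rpow h3 (by linarith)) _)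
      calc ∑ i, (ai i) ^ τ = ((∑ i, (ai i) ^ τ) ^ r) ^ (1 / r) := by
            rw [← ENNReal.rpow_mul, mul_one_div_cancel hr0.ne', ENNReal.rpow_one]
        _ ≤ ((N : ℝ≥0∞) ^ (r - 1) * ∑ i, (ai i) ^ P) ^ (1 / r) :=
            ENNReal.rpow_le_rpow h4 (by positivity)
    -- (ε) Minkowski
    have hMink : (∑ i, (ai i) ^ P) ^ (1 / P) ≤ (∑ i, (e i) ^ P) ^ (1 / P) + B := by
      have h1 : (∑ i, (ai i) ^ P) ^ (1 / P) ≤ (∑ i, (e i + Bi i) ^ P) ^ (1 / P) := by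
        apply ENNReal.rpow_le_rpow _ (by positivity)
        exact Finset.sum_le_sum fun i _ => ENNReal.rpow_le_rpow (ha i) hP0.le
      refine le_trans h1 (le_trans (ENNReal.Lp_add_le Finset.univ e Bi hP1) ?_)
      refine add_le_add_right ?_ _
      have h2 : ∀ i : Fin M, (Bi i) ^ P = v i * B ^ P := by
        intro i
        rw [hBidef]
        rw [ENNReal.mul_rpow_of_nonneg _ _ hP0.le, ← ENNReal.rpow_mul,
          one_div, inv_mul_cancel₀ hP0.ne', ENNReal.rpow_one]
      simp_rw [h2]
      rw [← Finset.sum_mul]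
      have h3 : (∑ i, v i) * B ^ P ≤ 1 * B ^ P := by
        apply mul_le_mul_left
        exact sum_vol_le a b w h hdisj hcover
      rw [one_mul] at h3
      calc ((∑ i, v i) * B ^ P) ^ (1 / P) ≤ (B ^ P) ^ (1 / P) :=
            ENNReal.rpow_le_rpow h3 (by positivity)
        _ = B := by rw [← ENNReal.rpow_mul, mul_one_div_cancel hP0.ne', ENNReal.rpow_one]
    -- exponent identities
    have hPr : r * τ = P := by rw [mul_comm]; exact idA
    have E2 : 1 / r * (1 / τ) = 1 / P := by
      rw [one_div_mul_one_div, hPr]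
    have E1 : (r - 1) * (1 / r * (1 / τ)) = 1 / 2 := by
      rw [E2, hrdef]
      field_simp
      ring
    -- assemble
    have hXle : X ≤ k * (∑ i, (ai i) ^ P) ^ (1 / P) := by
      calc X ≤ (((N : ℝ≥0∞) ^ (r - 1) * ∑ i, (ai i) ^ P) ^ (1 / r)) ^ (1 / τ) :=
            ENNReal.rpow_le_rpow (le_trans hL hHolder) (by positivity)
        _ = ((N : ℝ≥0∞) ^ (r - 1) * ∑ i, (ai i) ^ P) ^ (1 / r * (1 / τ)) := by
            rw [← ENNReal.rpow_mul]
        _ = ((N : ℝ≥0∞) ^ (r - 1)) ^ (1 / r * (1 / τ)) *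
              ((∑ i, (ai i) ^ P) ^ (1 / r * (1 / τ))) :=
            ENNReal.mul_rpow_of_nonneg _ _ (by positivity)
        _ = k * (∑ i, (ai i) ^ P) ^ (1 / P) := by
            rw [← ENNReal.rpow_mul, E1, E2, hkdef]
    have hglob : globErrP p (fun i => constErr p f (rect (a i) (b i) (w i) (h i))) =
        (∑ i, (e i) ^ P) ^ (1 / P) := by
      rw [globErrP, if_neg hptop]
    have hkB : k * B ≤ c := by
      have hd' : ε * d = (ε * A) * ((N:ℝ) ^ (-(1:ℝ) / 2)) := by rw [hddef]; ring
      rw [hBdef, hd', ENNReal.ofReal_mul (by positivity)]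
      have hNR : (0:ℝ) < (N:ℝ) := Nat.cast_pos.mpr hN
      have h5 : ENNReal.ofReal ((N:ℝ) ^ (-(1:ℝ) / 2)) = (N : ℝ≥0∞) ^ (-(1:ℝ) / 2) := by
        rw [← ENNReal.ofReal_rpow_of_pos hNR, ENNReal.ofReal_natCast]
      rw [h5, hcdef]
      calc k * (ENNReal.ofReal (ε * A) * (N : ℝ≥0∞) ^ (-(1:ℝ) / 2)) =
          ENNReal.ofReal (ε * A) * (k * (N : ℝ≥0∞) ^ (-(1:ℝ) / 2)) := by ring
        _ = ENNReal.ofReal (ε * A) := by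
            rw [hkdef, ← ENNReal.rpow_add _ _ hNne hNtop]
            norm_num
        _ ≤ ENNReal.ofReal (ε * A) := le_rfl
    calc X ≤ k * (∑ i, (ai i) ^ P) ^ (1 / P) := hXle
      _ ≤ k * ((∑ i, (e i) ^ P) ^ (1 / P) + B) := mul_le_mul_right hMink _
      _ = k * (∑ i, (e i) ^ P) ^ (1 / P) + k * B := by ring
      _ ≤ k * globErrP p (fun i => constErr p f (rect (a i) (b i) (w i) (h i))) + c := by
          rw [hglob]
          exact add_le_add_right hkB _
  -- sInf argument
  have h1 : ∀ g ∈ { e : ℝ≥0∞ | ∃ M : ℕ, 1 ≤ M ∧ M ≤ N ∧ ∃ a b w h : Fin M → ℝ,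
      (∀ i, 0 < w i ∧ 0 < h i) ∧
      (∀ i, Metric.diam (rect (a i) (b i) (w i) (h i)) ≤ A * (N : ℝ) ^ (-(1:ℝ) / 2)) ∧
      (∀ i i', i ≠ i' →
        Disjoint (interior (rect (a i) (b i) (w i) (h i)))
          (interior (rect (a i') (b i') (w i') (h i')))) ∧
      (⋃ i, rect (a i) (b i) (w i) (h i)) = unitSq ∧
      e = globErrP p fun i => constErr p f (rect (a i) (b i) (w i) (h i)) },
      k⁻¹ * (X - c) ≤ g := by
    intro g hg
    have h2 : X - c ≤ k * g := tsub_le_iff_right.mpr (hpart g hg)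
    calc k⁻¹ * (X - c) ≤ k⁻¹ * (k * g) := mul_le_mul_right h2 _
      _ = g := by rw [← mul_assoc, ENNReal.inv_mul_cancel hk0 hktop, one_mul]
  have h3 : k⁻¹ * (X - c) ≤ rectSigmaA p A f N := le_sInf h1
  have h4 : X - c ≤ k * rectSigmaA p A f N := by
    calc X - c = k * (k⁻¹ * (X - c)) := by
          rw [← mul_assoc, ENNReal.mul_inv_cancel hk0 hktop, one_mul]
      _ ≤ k * rectSigmaA p A f N := mul_le_mul_right h3 _
  exact tsub_le_iff_right.mp h4

/-- Lower estimate for piecewise constant approximation on adaptive anisotropic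
rectangle partitions with diameters at most `A N^{-1/2}`: for `f ∈ C¹([0,1]²)`,
`p < ∞` and `1/τ = 1/p + 1/2`, `liminf_N N^{1/2} σ_N^A(f)_p ≥ ‖K_p(∇f)‖_{L^τ}`. -/
theorem stmt15 (p : ℝ≥0∞) (hp : 1 ≤ p) (hptop : p ≠ ⊤) (τ : ℝ)
    (hτ : 1 / τ = 1 / p.toReal + 1 / 2) (A : ℝ) (hA : 0 < A)
    (f : ℝ × ℝ → ℝ) (hf : ContDiffOn ℝ 1 f unitSq) :
    ENNReal.ofReal ((∫ z in unitSq,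
        (shapeK p (fderiv ℝ f z (1, 0)) (fderiv ℝ f z (0, 1))).toReal ^ τ) ^ (1 / τ)) ≤
      Filter.liminf (fun N : ℕ => (N : ℝ≥0∞) ^ ((1:ℝ) / 2) * rectSigmaA p A f N)
        Filter.atTop := by
  have hP1 : 1 ≤ p.toReal := by
    have := ENNReal.toReal_mono hptop hp
    simpa using this
  have hP0 : 0 < p.toReal := lt_of_lt_of_le one_pos hP1
  have hτpos : 0 < τ := by
    have h1 : 0 < 1 / τ := by rw [hτ]; positivity
    exact one_div_pos.mp h1
  set X : ℝ≥0∞ :=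
    (∫⁻ z in unitSq, (shapeK p (fderiv ℝ f z (1, 0)) (fderiv ℝ f z (0, 1))) ^ τ) ^ (1 / τ)
    with hXdef
  -- Step 1 : LHS ≤ X
  have hstep1 : ENNReal.ofReal ((∫ z in unitSq,
      (shapeK p (fderiv ℝ f z (1, 0)) (fderiv ℝ f z (0, 1))).toReal ^ τ) ^ (1 / τ)) ≤ X := by
    set F : ℝ × ℝ → ℝ :=
      fun z => (shapeK p (fderiv ℝ f z (1, 0)) (fderiv ℝ f z (0, 1))).toReal ^ τ with hFdef
    by_cases hint : Integrable F (volume.restrict unitSq)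
    · have hnn : 0 ≤ᵐ[volume.restrict unitSq] F :=
        Filter.Eventually.of_forall fun z => Real.rpow_nonneg ENNReal.toReal_nonneg τ
      have h1 : ENNReal.ofReal (∫ z in unitSq, F z) = ∫⁻ z in unitSq, ENNReal.ofReal (F z) :=
        MeasureTheory.ofReal_integral_eq_lintegral_ofReal hint hnn
      have h2 : ∀ z, ENNReal.ofReal (F z) ≤
          (shapeK p (fderiv ℝ f z (1, 0)) (fderiv ℝ f z (0, 1))) ^ τ := by
        intro z
        by_cases hK : shapeK p (fderiv ℝ f z (1, 0)) (fderiv ℝ f z (0, 1)) = ⊤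
        · rw [hK, ENNReal.top_rpow_of_pos hτpos]
          exact le_top
        · rw [hFdef]
          rw [← ENNReal.ofReal_rpow_of_nonneg ENNReal.toReal_nonneg hτpos.le,
            ENNReal.ofReal_toReal hK]
      have hnn2 : 0 ≤ ∫ z in unitSq, F z :=
        integral_nonneg fun z => Real.rpow_nonneg ENNReal.toReal_nonneg τ
      calc ENNReal.ofReal ((∫ z in unitSq, F z) ^ (1 / τ))
          = ENNReal.ofReal (∫ z in unitSq, F z) ^ (1 / τ) := by
            rw [ENNReal.ofReal_rpow_of_nonneg hnn2 (by positivity)]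
        _ = (∫⁻ z in unitSq, ENNReal.ofReal (F z)) ^ (1 / τ) := by rw [h1]
        _ ≤ X := ENNReal.rpow_le_rpow (lintegral_mono fun z => h2 z) (by positivity)
    · rw [integral_undef hint, Real.zero_rpow (one_div_ne_zero hτpos.ne')]
      simp
  refine le_trans hstep1 ?_
  -- Step 2 : X ≤ liminf
  refine ENNReal.le_of_forall_pos_le_add ?_
  intro η hη hlim
  set ε : ℝ := (η : ℝ) / A with hεdef
  have hε : 0 < ε := div_pos (by exact_mod_cast hη) hA
  obtain ⟨δ, hδpos, hk3⟩ := key3 p hp hptop τ hτ A hA f hf ε hε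
  have htend : Filter.Tendsto (fun N : ℕ => A * (N : ℝ) ^ (-(1:ℝ) / 2)) Filter.atTop (nhds 0) := by
    have h1 : Filter.Tendsto (fun x : ℝ => x ^ (-(1:ℝ) / 2)) Filter.atTop (nhds 0) := by
      have := tendsto_rpow_neg_atTop (by norm_num : (0:ℝ) < 1 / 2)
      convert this using 2
      norm_num
    have h2 := (h1.comp tendsto_natCast_atTop_atTop).const_mul A
    simpa using h2
  have hev : ∀ᶠ N : ℕ in Filter.atTop,
      X - ENNReal.ofReal (ε * A) ≤ (N : ℝ≥0∞) ^ ((1:ℝ) / 2) * rectSigmaA p A f N := by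
    filter_upwards [htend.eventually (gt_mem_nhds hδpos), Filter.eventually_ge_atTop 1]
      with N h1 h2
    exact tsub_le_iff_right.mpr (hk3 N h2 h1.le)
  have hcob : Filter.IsCoboundedUnder (· ≥ ·) Filter.atTop
      (fun N : ℕ => (N : ℝ≥0∞) ^ ((1:ℝ) / 2) * rectSigmaA p A f N) :=
    ⟨⊤, fun a _ => le_top⟩
  have h3 := Filter.le_liminf_of_le hcob hev
  have h4 : ENNReal.ofReal (ε * A) = (η : ℝ≥0∞) := by
    rw [hεdef, div_mul_cancel₀ _ hA.ne', ENNReal.ofReal_coe_nnreal]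
  rw [h4] at h3
  exact tsub_le_iff_right.mp h3
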